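/- arXiv:2309.12513 — 2 statements merged into one kernel-verified Lean document; each statement's English description precedes it below -/
import Mathlib

section
/- Let f : {0,1}^n → {0,1} be monotone (x ≤ y implies f(x) ≤ f(y)). Then the average sensitivity of f, defined as E_{x}[ |{i : f(x) ≠ f(x with bit i flipped)}| ] with x uniform over {0,1}^n, is at most √n. -/
open Finset

section Aux

variable {n : ℕ}

private noncomputable def chi (i : Fin n) (x : Fin n → Bool) : ℝ :=
  if x i then -1 else 1

private def flipI (i : Fin n) (x : Fin n → Bool) : Fin n → Bool :=
  Function.update x i (!x i)

private lemma flip_invol (i : Fin n) : Function.Involutive (flipI i) := by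
  intro x
  funext j
  by_cases h : j = i
  · subst h
    simp [flipI, Function.update_self]
  · simp [flipI, Function.update_of_ne h]

private lemma chi_flip_self (i : Fin n) (x : Fin n → Bool) :
    chi i (flipI i x) = -chi i x := by
  simp only [chi, flipI, Function.update_self]
  cases x i <;> simp

private lemma chi_flip_ne {i j : Fin n} (h : j ≠ i) (x : Fin n → Bool) :
    chi j (flipI i x) = chi j x := by
  simp [chi, flipI, Function.update_of_ne h]

private lemma ortho (i j : Fin n) :
    ∑ x : Fin n → Bool, chi i x * chi j x = if i = j then (2:ℝ) ^ n else 0 := by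
  by_cases h : i = j
  · subst h
    have : ∀ x : Fin n → Bool, chi i x * chi i x = 1 := by
      intro x; simp only [chi]; by_cases hx : x i <;> simp [hx]
    simp [this, Finset.card_univ]
  · rw [if_neg h]
    have hperm := (flip_invol i).toPerm
    have hre : ∑ x : Fin n → Bool, chi i x * chi j x
        = ∑ x : Fin n → Bool, chi i (flipI i x) * chi j (flipI i x) :=
      (Fintype.sum_equiv ((flip_invol i).toPerm) _ _ (fun x => rfl)).symm
    have hneg : ∀ x : Fin n → Bool,
        chi i (flipI i x) * chi j (flipI i x) = -(chi i x * chi j x) := by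
      intro x
      rw [chi_flip_self, chi_flip_ne (Ne.symm h)]
      ring
    simp only [hneg, Finset.sum_neg_distrib] at hre
    linarith

end Aux

/-- the average sensitivity of a monotone Boolean function on `{0,1}^n`
is at most `√n`. -/
theorem stmt_4 (n : ℕ) (f : (Fin n → Bool) → Bool)
    (hmono : ∀ x y : Fin n → Bool, (∀ i, x i ≤ y i) → f x ≤ f y) :
    (∑ x : Fin n → Bool,
        ((Finset.univ.filter fun i : Fin n =>
            f x ≠ f (Function.update x i (!x i))).card : ℝ)) / 2 ^ n
      ≤ Real.sqrt n := by
  classical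
  set F : (Fin n → Bool) → ℝ := fun x => if f x then -1 else 1 with hF
  set L : (Fin n → Bool) → ℝ := fun x => ∑ i : Fin n, chi i x with hL
  set S : ℝ := ∑ x : Fin n → Bool,
      ((Finset.univ.filter fun i : Fin n =>
          f x ≠ f (Function.update x i (!x i))).card : ℝ) with hS
  -- S as double sum of indicators
  have hS1 : S = ∑ i : Fin n, ∑ x : Fin n → Bool,
      (if f x ≠ f (flipI i x) then (1:ℝ) else 0) := by
    rw [hS, Finset.sum_comm]
    congr 1
    funext x
    rw [Finset.card_filter]
    push_cast
    simp [flipI]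
    exact Finset.sum_congr rfl fun i _ => by split_ifs <;> simp_all
  -- key monotone identity per coordinate
  have hkey : ∀ i : Fin n, ∑ x : Fin n → Bool,
      (if f x ≠ f (flipI i x) then (1:ℝ) else 0)
      = ∑ x : Fin n → Bool, F x * chi i x := by
    intro i
    set g : (Fin n → Bool) → ℝ :=
      fun x => (if f x ≠ f (flipI i x) then (1:ℝ) else 0) - F x * chi i x with hg
    have hre : ∑ x : Fin n → Bool, g (flipI i x) = ∑ x : Fin n → Bool, g x :=
      Fintype.sum_equiv (flip_invol i).toPerm (fun x => g (flipI i x)) g fun x => rfl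
    have hcancel : ∀ x : Fin n → Bool, g x + g (flipI i x) = 0 := by
      intro x
      have hσσ : flipI i (flipI i x) = x := flip_invol i x
      have h2 : chi i (flipI i x) = -chi i x := chi_flip_self i x
      have hχ : chi i x = if x i then -1 else 1 := rfl
      cases hx : x i
      · have hle : f x ≤ f (flipI i x) := by
          apply hmono
          intro j
          by_cases hj : j = i
          · subst hj; simp [flipI, Function.update_self, hx]
          · simp [flipI, Function.update_of_ne hj]
        cases hfx : f x <;> cases hfy : f (flipI i x)
        · simp [hg, hF, hfx, hfy, hσσ, h2]
        · simp [hg, hF, hfx, hfy, hσσ, h2, hχ, hx]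
        · rw [hfx, hfy] at hle; exact absurd hle (by simp)
        · simp [hg, hF, hfx, hfy, hσσ, h2]
      · have hle : f (flipI i x) ≤ f x := by
          apply hmono
          intro j
          by_cases hj : j = i
          · subst hj; simp [flipI, Function.update_self, hx]
          · simp [flipI, Function.update_of_ne hj]
        cases hfx : f x <;> cases hfy : f (flipI i x)
        · simp [hg, hF, hfx, hfy, hσσ, h2]
        · rw [hfx, hfy] at hle; exact absurd hle (by simp)
        · simp [hg, hF, hfx, hfy, hσσ, h2, hχ, hx]
        · simp [hg, hF, hfx, hfy, hσσ, h2]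
    have hzero : ∑ x : Fin n → Bool, g x = 0 := by
      have h2s : (2:ℝ) * ∑ x : Fin n → Bool, g x
          = ∑ x : Fin n → Bool, (g x + g (flipI i x)) := by
        rw [Finset.sum_add_distrib, hre]; ring
      simp only [hcancel, Finset.sum_const_zero] at h2s
      linarith
    have := hzero
    rw [hg, Finset.sum_sub_distrib] at this
    linarith
  have hS2 : S = ∑ x : Fin n → Bool, F x * L x := by
    rw [hS1]
    simp_rw [hkey]
    rw [Finset.sum_comm]
    simp [hL, Finset.mul_sum]
  -- bound by sum of |L|
  have hS3 : S ≤ ∑ x : Fin n → Bool, |L x| := by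
    rw [hS2]
    apply Finset.sum_le_sum
    intro x _
    calc F x * L x ≤ |F x * L x| := le_abs_self _
    _ = |F x| * |L x| := abs_mul _ _
    _ ≤ 1 * |L x| := by
        apply mul_le_mul_of_nonneg_right _ (abs_nonneg _)
        rw [hF]; by_cases h : f x <;> simp [h]
    _ = |L x| := one_mul _
  -- sum of L^2
  have hL2 : ∑ x : Fin n → Bool, (L x) ^ 2 = n * 2 ^ n := by
    have : ∀ x : Fin n → Bool, (L x) ^ 2 = ∑ i : Fin n, ∑ j : Fin n, chi i x * chi j x := by
      intro x
      rw [hL, sq, Finset.sum_mul_sum]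
    simp_rw [this]
    rw [Finset.sum_comm]
    have : ∀ i : Fin n, ∑ x : Fin n → Bool, ∑ j : Fin n, chi i x * chi j x = 2 ^ n := by
      intro i
      rw [Finset.sum_comm]
      simp [ortho i]
    simp [this]
  have hSnn : 0 ≤ S := by
    rw [hS]
    exact Finset.sum_nonneg fun x _ => by positivity
  -- Cauchy-Schwarz
  have hCS : (∑ x : Fin n → Bool, |L x|) ^ 2 ≤ 2 ^ n * (n * 2 ^ n) := by
    calc (∑ x : Fin n → Bool, |L x|) ^ 2
        ≤ (Finset.univ.card : ℝ) * ∑ x : Fin n → Bool, |L x| ^ 2 :=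
          sq_sum_le_card_mul_sum_sq
      _ = 2 ^ n * (n * 2 ^ n) := by
          simp_rw [sq_abs]
          rw [hL2]
          simp [Finset.card_univ]
  have h1 : (0:ℝ) ≤ S / 2 ^ n := div_nonneg hSnn (by positivity)
  rw [Real.le_sqrt h1 (Nat.cast_nonneg n), div_pow,
    div_le_iff₀ (by positivity : (0:ℝ) < ((2:ℝ) ^ n) ^ 2)]
  have hS4 : S ^ 2 ≤ 2 ^ n * (n * 2 ^ n) :=
    le_trans (pow_le_pow_left₀ hSnn hS3 2) hCS
  calc S ^ 2 ≤ 2 ^ n * (n * 2 ^ n) := hS4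
    _ = n * ((2:ℝ) ^ n) ^ 2 := by ring
end

section
/- Fix c₁ ∈ (0, 0.01), let a be a sufficiently large positive integer, and define h : {0,1}^a → {0,1} by h(x) = 1 if |x| > a/2 + c₁√a, h(x) = 0 if |x| ∈ [a/2 − c₁√a, a/2 + c₁√a], and h(x) = 0 if |x| < a/2 − c₁√a (i.e., h is the indicator of the top band). Define g : {0,1}^a → {0,1} by g(x) = 0 if |x| > a/2 + c₁√a, g(x) = 0 in the middle band, and g(x) = 1 if |x| < a/2 − c₁√a. Then g is Ω(1)-far from monotone: there exist Ω(2^a) disjoint pairs (x, y) with x < y coordinatewise, g(x) = 1, and g(y) = 0. -/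
lemma cb_sqrt (m : ℕ) : (Nat.centralBinom m : ℝ) * Real.sqrt (3*m+1) ≤ 4 ^ m := by
  induction m with
  | zero => simp [Nat.centralBinom]
  | succ m ih =>
    have key : (m+1 : ℝ) * Nat.centralBinom (m+1) = 2 * (2*m+1) * Nat.centralBinom m := by
      exact_mod_cast congrArg (Nat.cast (R := ℝ)) (Nat.succ_mul_centralBinom_succ m)
    have hcb : (0:ℝ) ≤ Nat.centralBinom m := by positivity
    have hstep : (2*m+1 : ℝ) * Real.sqrt (3*(m+1)+1) ≤ 2*(m+1) * Real.sqrt (3*m+1) := by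
      have h := Real.sqrt_le_sqrt (show ((2*m+1 : ℝ))^2 * (3*(m+1)+1) ≤ (2*(m+1))^2 * (3*m+1) by nlinarith [sq_nonneg (m:ℝ)])
      calc (2*m+1 : ℝ) * Real.sqrt (3*(m+1)+1)
          = Real.sqrt ((2*m+1)^2 * (3*(m+1)+1)) := by
            rw [Real.sqrt_mul (by positivity), Real.sqrt_sq (by positivity)]
        _ ≤ Real.sqrt ((2*(m+1))^2 * (3*m+1)) := h
        _ = 2*(m+1) * Real.sqrt (3*m+1) := by
            rw [Real.sqrt_mul (by positivity), Real.sqrt_sq (by positivity)]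
    have hm1 : (0:ℝ) < m+1 := by positivity
    rw [← mul_le_mul_iff_right₀ hm1]
    push_cast
    calc (m+1:ℝ) * ((Nat.centralBinom (m+1) : ℝ) * Real.sqrt (3*(m+1)+1))
        = 2 * (Nat.centralBinom m : ℝ) * ((2*m+1) * Real.sqrt (3*(m+1)+1)) := by
          rw [← mul_assoc, key]; ring
      _ ≤ 2 * (Nat.centralBinom m : ℝ) * (2*(m+1) * Real.sqrt (3*m+1)) := by
          apply mul_le_mul_of_nonneg_left hstep (by positivity)
      _ = (m+1) * 4 * ((Nat.centralBinom m : ℝ) * Real.sqrt (3*m+1)) := by ring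
      _ ≤ (m+1) * 4 * 4 ^ m := by
          apply mul_le_mul_of_nonneg_left ih (by positivity)
      _ = (m+1) * 4 ^ (m+1) := by ring

lemma choose_half_sqrt (n : ℕ) (hn : 1 ≤ n) :
    (n.choose (n/2) : ℝ) * Real.sqrt n ≤ 2 ^ n := by
  rcases Nat.even_or_odd n with ⟨m, hm⟩ | ⟨m, hm⟩
  · subst hm
    have h1 : (m+m)/2 = m := by omega
    rw [h1]
    have h2 : (Nat.choose (m+m) m : ℝ) = Nat.centralBinom m := by
      rw [Nat.centralBinom]; norm_num [two_mul]
    rw [h2]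
    push_cast
    calc (Nat.centralBinom m : ℝ) * Real.sqrt (m+m)
        ≤ (Nat.centralBinom m : ℝ) * Real.sqrt (3*m+1) := by
          apply mul_le_mul_of_nonneg_left (Real.sqrt_le_sqrt (by push_cast; nlinarith [Nat.one_le_iff_ne_zero.mp (by omega : 1 ≤ m)])) (by positivity)
      _ ≤ 4 ^ m := cb_sqrt m
      _ = 2 ^ (m+m) := by rw [show (4:ℝ) = 2^2 by norm_num, ← pow_mul]; ring_nf
  · subst hm
    have h1 : (2*m+1)/2 = m := by omega
    rw [h1]
    have key : (Nat.choose (2*m+1) m : ℝ) * 2 = Nat.centralBinom (m+1) := by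
      have : Nat.centralBinom (m+1) = Nat.choose (2*m+1) m + Nat.choose (2*m+1) (m+1) := by
        rw [Nat.centralBinom, show 2*(m+1) = (2*m+1)+1 by ring, Nat.choose_succ_succ']
      have h2 : Nat.choose (2*m+1) (m+1) = Nat.choose (2*m+1) m := by
        rw [← Nat.choose_symm (by omega)]; congr 1; omega
      rw [this, h2]; push_cast; ring
    have hcb := cb_sqrt (m+1)
    push_cast at hcb
    have h3 : (Nat.choose (2*m+1) m : ℝ) = Nat.centralBinom (m+1) / 2 := by
      rw [← key]; ring
    rw [h3]
    push_cast
    have h4 : Real.sqrt (2*m+1) ≤ Real.sqrt (3*(m+1)+1) := Real.sqrt_le_sqrt (by push_cast; linarith)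
    calc (Nat.centralBinom (m+1) : ℝ) / 2 * Real.sqrt (2*m+1)
        ≤ (Nat.centralBinom (m+1) : ℝ) / 2 * Real.sqrt (3*(m+1)+1) := by
          apply mul_le_mul_of_nonneg_left h4 (by positivity)
      _ = (Nat.centralBinom (m+1) : ℝ) * Real.sqrt (3*(m+1)+1) / 2 := by ring
      _ ≤ 4 ^ (m+1) / 2 := by linarith
      _ = 2 ^ (2*m+1) := by
          rw [show (4:ℝ) = 2^2 by norm_num, ← pow_mul]
          rw [show 2*(m+1) = (2*m+1)+1 by ring, pow_succ]; ring
  done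

open Finset

variable {n : ℕ}

/-- the target set: supersets of `x` of size `n - x.card` -/
def tgt (n : ℕ) (x : Finset (Fin n)) : Finset (Finset (Fin n)) :=
  (Finset.powersetCard (n - x.card) Finset.univ).filter (x ⊆ ·)

lemma mem_tgt {x y : Finset (Fin n)} : y ∈ tgt n x ↔ y.card = n - x.card ∧ x ⊆ y := by
  simp [tgt, Finset.mem_powersetCard_univ, and_comm]

lemma card_tgt (x : Finset (Fin n)) (hk : 2 * x.card ≤ n) :
    (tgt n x).card = (n - x.card).choose x.card := by
  classical
  have hc : (xᶜ : Finset (Fin n)).card = n - x.card := by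
    rw [Finset.card_compl, Fintype.card_fin]
  rw [← hc, ← Finset.card_powersetCard x.card xᶜ]
  refine Finset.card_bij' (fun y _ => yᶜ) (fun z _ => zᶜ) ?_ ?_ ?_ ?_
  · intro y hy
    rw [mem_tgt] at hy
    rw [Finset.mem_powersetCard]
    constructor
    · intro i hi
      simp only [Finset.mem_compl] at hi ⊢
      exact fun h => hi (hy.2 h)
    · rw [Finset.card_compl, hy.1, Fintype.card_fin]
      omega
  · intro z hz
    rw [Finset.mem_powersetCard] at hz
    rw [mem_tgt]
    constructor
    · rw [Finset.card_compl, hz.2, Fintype.card_fin]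
    · intro i hi
      simp only [Finset.mem_compl]
      intro hmem
      exact (Finset.mem_compl.mp (hz.1 hmem)) hi
  · intro y _; simp
  · intro z _; simp

lemma card_subs_le (y : Finset (Fin n)) (k : ℕ) (A : Finset (Finset (Fin n)))
    (hA : ∀ x ∈ A, x.card = k) (hy : y.card = n - k) :
    (A.filter (· ⊆ y)).card ≤ (n - k).choose k := by
  classical
  rw [← hy, ← Finset.card_powersetCard k y]
  apply Finset.card_le_card
  intro x hx
  rw [Finset.mem_filter] at hx
  rw [Finset.mem_powersetCard]
  exact ⟨hx.2, hA x hx.1⟩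

/-- Hall condition within a single level -/
lemma hall_level (k : ℕ) (hk : 2 * k ≤ n) (A : Finset (Finset (Fin n)))
    (hA : ∀ x ∈ A, x.card = k) :
    A.card ≤ (A.biUnion (tgt n)).card := by
  classical
  set N := A.biUnion (tgt n) with hN
  set D := (n - k).choose k with hD
  have hDpos : 0 < D := Nat.choose_pos (by omega)
  have key : A.card * D ≤ N.card * D := by
    have h1 : ∀ x ∈ A, (tgt n x).card = D := by
      intro x hx; rw [card_tgt x (by rw [hA x hx]; omega), hA x hx]
    calc A.card * D = ∑ x ∈ A, (tgt n x).card := by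
          rw [Finset.sum_congr rfl h1, Finset.sum_const, smul_eq_mul]
      _ = ∑ x ∈ A, (N.filter (· ∈ tgt n x)).card := by
          apply Finset.sum_congr rfl
          intro x hx
          congr 1
          rw [Finset.filter_mem_eq_inter,
            Finset.inter_eq_right.mpr (Finset.subset_biUnion_of_mem (tgt n) hx)]
      _ = ∑ y ∈ N, (A.filter (fun x => y ∈ tgt n x)).card := by
          simp_rw [Finset.card_filter]
          exact Finset.sum_comm
      _ ≤ ∑ y ∈ N, D := by
          apply Finset.sum_le_sum
          intro y hy
          obtain ⟨x₀, hx₀, hyx₀⟩ := Finset.mem_biUnion.mp hy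
          have hycard : y.card = n - k := by
            rw [(mem_tgt.mp hyx₀).1, hA x₀ hx₀]
          calc (A.filter (fun x => y ∈ tgt n x)).card
              ≤ (A.filter (· ⊆ y)).card := by
                apply Finset.card_le_card
                intro x hx
                rw [Finset.mem_filter] at hx ⊢
                exact ⟨hx.1, (mem_tgt.mp hx.2).2⟩
            _ ≤ D := card_subs_le y k A hA hycard
      _ = N.card * D := by rw [Finset.sum_const, smul_eq_mul]
  exact Nat.le_of_mul_le_mul_right key hDpos
lemma exists_matching (n K : ℕ) (hK : 2*K < n) :
    ∃ f : {x : Finset (Fin n) // x.card ≤ K} → Finset (Fin n),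
      Function.Injective f ∧ ∀ x, x.1 ⊆ f x ∧ (f x).card = n - x.1.card := by
  classical
  have hall : ∀ s : Finset {x : Finset (Fin n) // x.card ≤ K},
      s.card ≤ (s.biUnion (fun x => tgt n x.1)).card := by
    intro s
    have hsplit : s.card = ∑ k ∈ Finset.range (K+1), (s.filter (fun x => x.1.card = k)).card := by
      apply Finset.card_eq_sum_card_fiberwise
      intro x _
      rw [Finset.mem_coe, Finset.mem_range]
      exact Nat.lt_succ_of_le x.2
    have himg : ∀ k, (s.filter (fun x => x.1.card = k)).card
        = ((s.filter (fun x => x.1.card = k)).image Subtype.val).card := by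
      intro k
      rw [Finset.card_image_of_injective _ Subtype.val_injective]
    have hbi : s.biUnion (fun x => tgt n x.1)
        = (Finset.range (K+1)).biUnion
            (fun k => ((s.filter (fun x => x.1.card = k)).image Subtype.val).biUnion (tgt n)) := by
      ext y
      simp only [Finset.mem_biUnion, Finset.mem_range, Finset.mem_filter, Finset.mem_image]
      constructor
      · rintro ⟨x, hx, hy⟩
        exact ⟨x.1.card, Nat.lt_succ_of_le x.2, x.1, ⟨x, ⟨hx, rfl⟩, rfl⟩, hy⟩
      · rintro ⟨k, _, z, ⟨x, ⟨hx, hxk⟩, rfl⟩, hy⟩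
        exact ⟨x, hx, hy⟩
    rw [hsplit, hbi]
    rw [Finset.card_biUnion]
    · apply Finset.sum_le_sum
      intro k hk
      rw [Finset.mem_range] at hk
      rw [himg]
      apply hall_level k (by omega)
      rintro z hz
      rw [Finset.mem_image] at hz
      obtain ⟨x, hx, rfl⟩ := hz
      exact (Finset.mem_filter.mp hx).2
    · intro k₁ h₁ k₂ h₂ hne
      rw [Finset.mem_coe, Finset.mem_range] at h₁ h₂
      apply Finset.disjoint_left.mpr
      intro y hy₁ hy₂
      rw [Finset.mem_biUnion] at hy₁ hy₂
      obtain ⟨z₁, hz₁, hyz₁⟩ := hy₁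
      obtain ⟨z₂, hz₂, hyz₂⟩ := hy₂
      rw [Finset.mem_image] at hz₁ hz₂
      obtain ⟨x₁, hx₁, rfl⟩ := hz₁
      obtain ⟨x₂, hx₂, rfl⟩ := hz₂
      have c₁ := (mem_tgt.mp hyz₁).1
      have c₂ := (mem_tgt.mp hyz₂).1
      have k₁' := (Finset.mem_filter.mp hx₁).2
      have k₂' := (Finset.mem_filter.mp hx₂).2
      rw [k₁'] at c₁
      rw [k₂'] at c₂
      omega
  obtain ⟨f, hinj, hmem⟩ :=
    (Finset.all_card_le_biUnion_card_iff_exists_injective (fun x : {x : Finset (Fin n) // x.card ≤ K} => tgt n x.1)).mp hall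
  exact ⟨f, hinj, fun x => ⟨(mem_tgt.mp (hmem x)).2, (mem_tgt.mp (hmem x)).1⟩⟩
lemma count_low (n K : ℕ) :
    Fintype.card {x : Finset (Fin n) // x.card ≤ K} = ∑ k ∈ Finset.range (K+1), n.choose k := by
  classical
  rw [Fintype.card_subtype]
  have : (Finset.univ.filter (fun x : Finset (Fin n) => x.card ≤ K))
      = (Finset.range (K+1)).biUnion (fun k => Finset.powersetCard k Finset.univ) := by
    ext x
    simp only [Finset.mem_filter, Finset.mem_univ, true_and, Finset.mem_biUnion,
      Finset.mem_range, Finset.mem_powersetCard_univ]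
    constructor
    · intro h; exact ⟨x.card, Nat.lt_succ_of_le h, rfl⟩
    · rintro ⟨k, hk, rfl⟩; omega
  rw [this, Finset.card_biUnion]
  · apply Finset.sum_congr rfl
    intro k _
    rw [Finset.card_powersetCard, Finset.card_univ, Fintype.card_fin]
  · intro k₁ _ k₂ _ hne
    apply Finset.disjoint_left.mpr
    intro x h₁ h₂
    rw [Finset.mem_powersetCard_univ] at h₁ h₂
    omega

lemma sum_split (n K : ℕ) (h2K : 2*K + 1 ≤ n) :
    2^n ≤ 2 * (∑ k ∈ Finset.range (K+1), n.choose k) + (n - 2*K - 1) * n.choose (n/2) := by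
  have htot : ∑ k ∈ Finset.range (n+1), n.choose k = 2^n := Nat.sum_range_choose n
  have h1 : K + 1 ≤ n - K := by omega
  have h2 : n - K ≤ n + 1 := by omega
  have split1 : ∑ k ∈ Finset.Ico 0 (K+1), n.choose k + ∑ k ∈ Finset.Ico (K+1) (n+1), n.choose k
      = ∑ k ∈ Finset.Ico 0 (n+1), n.choose k :=
    Finset.sum_Ico_consecutive _ (by omega) (by omega)
  have split2 : ∑ k ∈ Finset.Ico (K+1) (n-K), n.choose k + ∑ k ∈ Finset.Ico (n-K) (n+1), n.choose k
      = ∑ k ∈ Finset.Ico (K+1) (n+1), n.choose k :=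
    Finset.sum_Ico_consecutive _ h1 h2
  have hrefl : ∑ k ∈ Finset.Ico (n-K) (n+1), n.choose k = ∑ k ∈ Finset.range (K+1), n.choose k := by
    apply Finset.sum_nbij' (fun k => n - k) (fun k => n - k)
    · intro a ha
      rw [Finset.mem_Ico] at ha
      rw [Finset.mem_range]
      omega
    · intro a ha
      rw [Finset.mem_range] at ha
      rw [Finset.mem_Ico]
      omega
    · intro a ha
      rw [Finset.mem_Ico] at ha
      omega
    · intro a ha
      rw [Finset.mem_range] at ha
      omega
    · intro a ha
      rw [Finset.mem_Ico] at ha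
      rw [Nat.choose_symm (by omega)]
  have hmid : ∑ k ∈ Finset.Ico (K+1) (n-K), n.choose k ≤ (n - 2*K - 1) * n.choose (n/2) := by
    calc ∑ k ∈ Finset.Ico (K+1) (n-K), n.choose k
        ≤ ∑ _k ∈ Finset.Ico (K+1) (n-K), n.choose (n/2) :=
          Finset.sum_le_sum (fun k _ => Nat.choose_le_middle k n)
      _ = (n - 2*K - 1) * n.choose (n/2) := by
          rw [Finset.sum_const, smul_eq_mul, Nat.card_Ico]
          congr 1
          omega
  have hr : ∑ k ∈ Finset.Ico 0 (K+1), n.choose k = ∑ k ∈ Finset.range (K+1), n.choose k := by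
    rw [Finset.range_eq_Ico]
  have hr2 : ∑ k ∈ Finset.Ico 0 (n+1), n.choose k = 2^n := by
    rw [Finset.range_eq_Ico] at htot; exact htot
  omega
/-- Hamming weight of a point of `{0,1}^a`. -/
def hammingWt {a : ℕ} (x : Fin a → Bool) : ℕ :=
  (Finset.univ.filter fun i => x i = true).card

def toF {n : ℕ} (S : Finset (Fin n)) : Fin n → Bool := fun i => decide (i ∈ S)

lemma hammingWt_toF {n : ℕ} (S : Finset (Fin n)) : hammingWt (toF S) = S.card := by
  unfold hammingWt toF
  congr 1
  ext i
  simp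

lemma toF_injective {n : ℕ} : Function.Injective (toF (n := n)) := by
  intro S T h
  ext i
  have := congrFun h i
  simpa [toF] using this

lemma toF_lt {n : ℕ} {S T : Finset (Fin n)} (hsub : S ⊆ T) (hne : S ≠ T) : toF S < toF T := by
  rw [lt_iff_le_and_ne]
  constructor
  · intro i
    by_cases h : i ∈ S
    · simp [toF, h, hsub h]
    · simp [toF, h]
  · exact fun h => hne (toF_injective h)

set_option maxHeartbeats 1600000 in
/-- the indicator `g` of the bottom band
`{x : |x| < a/2 - c₁√a}` is `Ω(1)`-far from monotone: for all large enough `a`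
there are `Ω(2^a)` disjoint pairs `x < y` with `g(x) = 1` and `g(y) = 0`. -/
theorem stmt_11 :
    ∃ c : ℝ, 0 < c ∧ ∃ a₀ : ℕ, ∀ a : ℕ, a₀ ≤ a →
      ∀ c₁ : ℝ, 0 < c₁ → c₁ < 0.01 →
        ∃ M : ℕ, c * 2 ^ a ≤ (M : ℝ) ∧
          ∃ X Y : Fin M → (Fin a → Bool),
            (∀ j, X j < Y j) ∧
            (∀ j, (hammingWt (X j) : ℝ) < a / 2 - c₁ * Real.sqrt a) ∧
            (∀ j, a / 2 - c₁ * Real.sqrt a ≤ (hammingWt (Y j) : ℝ)) ∧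
            Function.Injective (Sum.elim X Y) := by
  refine ⟨1/10, by norm_num, 10000, ?_⟩
  intro a ha c₁ hc₁ hc₁'
  set n := a with hn
  -- basic facts about sqrt
  have hsqrt100 : (100:ℝ) ≤ Real.sqrt n := by
    rw [show (100:ℝ) = Real.sqrt (100^2) by rw [Real.sqrt_sq]; norm_num]
    apply Real.sqrt_le_sqrt
    norm_num
    exact_mod_cast ha
  have hsqrtpos : (0:ℝ) < Real.sqrt n := by linarith
  have hsqrtsq : Real.sqrt n * Real.sqrt n = n := Real.mul_self_sqrt (by positivity)
  have hsqrt_le : Real.sqrt n ≤ (n:ℝ)/100 := by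
    nlinarith
  set τ : ℝ := (n:ℝ)/2 - c₁ * Real.sqrt n with hτ
  have hτ_ge : (n:ℝ)/2 - Real.sqrt n / 100 ≤ τ := by
    have : c₁ * Real.sqrt n ≤ Real.sqrt n / 100 := by nlinarith
    simp only [hτ]; linarith
  have hτ_le : τ ≤ (n:ℝ)/2 := by
    have : 0 ≤ c₁ * Real.sqrt n := by positivity
    simp only [hτ]; linarith
  have hn100 : (10000:ℝ) ≤ (n:ℝ) := by exact_mod_cast ha
  have hτ_gt1 : (1:ℝ) < τ := by
    have h1 : Real.sqrt n / 100 ≤ (n:ℝ)/10000 := by linarith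
    simp only [hτ] at hτ_ge ⊢
    linarith
  -- define K
  set K : ℕ := (⌈τ⌉ - 1).toNat with hK
  have hceil_ge : (1:ℤ) ≤ ⌈τ⌉ - 1 := by
    have h1 : (1:ℤ) < ⌈τ⌉ := Int.lt_ceil.mpr (by push_cast; exact hτ_gt1)
    omega
  have hti : (((⌈τ⌉ - 1).toNat : ℤ)) = ⌈τ⌉ - 1 := Int.toNat_of_nonneg (by omega)
  have hKcast : (K:ℝ) = (⌈τ⌉:ℝ) - 1 := by
    rw [hK]
    exact_mod_cast congrArg (Int.cast : ℤ → ℝ) hti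
  have hKlt : (K:ℝ) < τ := by
    rw [hKcast]
    have := Int.ceil_lt_add_one τ
    linarith
  have hKge : τ - 1 ≤ (K:ℝ) := by
    rw [hKcast]
    have := Int.le_ceil τ
    linarith
  have h2K : 2*K < n := by
    have : (2*K:ℝ) < n := by
      have : (K:ℝ) < (n:ℝ)/2 := lt_of_lt_of_le hKlt hτ_le
      linarith
    exact_mod_cast this
  clear_value K τ n
  -- matching
  obtain ⟨f, hfinj, hf⟩ := exists_matching n K h2K
  refine ⟨Fintype.card {x : Finset (Fin n) // x.card ≤ K}, ?_, ?_⟩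
  · -- counting
    have hcount := count_low n K
    have hsum := sum_split n K (by omega)
    set T := ∑ k ∈ Finset.range (K+1), n.choose k with hT
    have hCmid : (n.choose (n/2) : ℝ) ≤ 2^n / Real.sqrt n := by
      have := choose_half_sqrt n (by omega)
      rw [le_div_iff₀ hsqrtpos]
      linarith
    have hcast : ((n - 2*K - 1 : ℕ) : ℝ) = (n:ℝ) - 2*K - 1 := by
      have h1 : n - 2*K - 1 = n - (2*K+1) := by omega
      rw [h1, Nat.cast_sub (by omega : 2*K+1 ≤ n)]
      push_cast
      ring
    have hmidbound : ((n - 2*K - 1 : ℕ) : ℝ) * (n.choose (n/2) : ℝ)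
        ≤ (2*c₁*Real.sqrt n + 1) * (2^n / Real.sqrt n) := by
      apply mul_le_mul
      · rw [hcast]
        simp only [hτ] at hKge
        linarith
      · exact hCmid
      · positivity
      · positivity
    have hexp : (2*c₁*Real.sqrt n + 1) * (2^n / Real.sqrt n) ≤ (3/100) * 2^n := by
      have h2npos : (0:ℝ) < 2^n := by positivity
      rw [add_mul]
      have e1 : 2*c₁*Real.sqrt n * (2^n / Real.sqrt n) = 2*c₁*2^n := by
        field_simp
      have e2 : (1:ℝ) * (2^n / Real.sqrt n) ≤ (1/100) * 2^n := by
        rw [one_mul, div_le_iff₀ hsqrtpos]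
        calc (1/100) * 2^n * Real.sqrt n ≥ (1/100) * 2^n * 100 := by nlinarith
          _ = 2^n := by ring
      rw [e1]
      have : 2*c₁*(2:ℝ)^n ≤ (2/100) * 2^n := by nlinarith
      linarith
    have hsumR : (2:ℝ)^n ≤ 2 * (T:ℝ) + ((n - 2*K - 1 : ℕ) : ℝ) * (n.choose (n/2) : ℝ) := by
      exact_mod_cast hsum
    have h2npos : (0:ℝ) < 2^n := by positivity
    have : (2:ℝ)^n ≤ 2 * (T:ℝ) + (3/100) * 2^n := by
      calc (2:ℝ)^n ≤ 2 * (T:ℝ) + ((n - 2*K - 1 : ℕ) : ℝ) * (n.choose (n/2) : ℝ) := hsumR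
        _ ≤ 2 * (T:ℝ) + (3/100) * 2^n := by linarith only [hmidbound, hexp]
    rw [hcount]
    linarith only [this, h2npos]
  · -- construction
    obtain ⟨e⟩ : Nonempty (Fin (Fintype.card {x : Finset (Fin n) // x.card ≤ K})
        ≃ {x : Finset (Fin n) // x.card ≤ K}) := ⟨(Fintype.equivFin _).symm⟩
    refine ⟨fun j => toF (e j).1, fun j => toF (f (e j)), ?_, ?_, ?_, ?_⟩
    · intro j
      apply toF_lt (hf (e j)).1
      intro hEq
      have := (hf (e j)).2
      rw [← hEq] at this
      have hle := (e j).2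
      omega
    · intro j
      rw [hammingWt_toF]
      calc ((e j).1.card : ℝ) ≤ (K:ℝ) := by exact_mod_cast (e j).2
        _ < τ := hKlt
    · intro j
      rw [hammingWt_toF, (hf (e j)).2]
      have hle : (e j).1.card ≤ K := (e j).2
      have hcst : ((n - (e j).1.card : ℕ):ℝ) = (n:ℝ) - (e j).1.card :=
        Nat.cast_sub (by omega : (e j).1.card ≤ n)
      rw [hcst]
      have h2 : ((e j).1.card : ℝ) ≤ (K:ℝ) := by exact_mod_cast hle
      have hKhalf : (K:ℝ) < (n:ℝ)/2 := lt_of_lt_of_le hKlt hτ_le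
      have hpos : (0:ℝ) < c₁ * Real.sqrt n := mul_pos hc₁ hsqrtpos
      have hτv : τ = (n:ℝ)/2 - c₁ * Real.sqrt n := hτ
      linarith only [hτv, hpos, hKhalf, h2, hτ_le]
    · intro u v huv
      match u, v with
      | Sum.inl j₁, Sum.inl j₂ =>
        simp only [Sum.elim_inl] at huv
        have := toF_injective huv
        have := Subtype.val_injective this
        have := e.injective this
        rw [this]
      | Sum.inr j₁, Sum.inr j₂ =>
        simp only [Sum.elim_inr] at huv
        have := hfinj (toF_injective huv)
        have := e.injective this
        rw [this]
      | Sum.inl j₁, Sum.inr j₂ =>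
        exfalso
        simp only [Sum.elim_inl, Sum.elim_inr] at huv
        have hc := congrArg Finset.card (toF_injective huv)
        have h1 : (e j₁).1.card ≤ K := (e j₁).2
        have h2 := (hf (e j₂)).2
        have h3 : (e j₂).1.card ≤ K := (e j₂).2
        omega
      | Sum.inr j₁, Sum.inl j₂ =>
        exfalso
        simp only [Sum.elim_inl, Sum.elim_inr] at huv
        have hc := congrArg Finset.card (toF_injective huv)
        have h1 : (e j₂).1.card ≤ K := (e j₂).2
        have h2 := (hf (e j₁)).2
        have h3 : (e j₁).1.card ≤ K := (e j₁).2
        omega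
end
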